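/- Let (K_m)_{m≥1} be a nonincreasing sequence of compact subsets of C and let K = ⋂_{m=1}^∞ K_m. Then the sequence φ(K_m) converges to φ(K) as m → ∞ (equivalently, inf_{m≥1} φ(K_m) = φ(K)). -/

import Mathlib

open MeasureTheory Matrix Set Filter Topology
open scoped ENNReal

noncomputable section

/-- The space `C` of continuous functions on `[0,1]` vanishing at `0`,
with the supremum metric (inherited from `C([0,1], ℝ)`). -/
abbrev Cz : Type := {f : C(Set.Icc (0:ℝ) 1, ℝ) // f ⟨0, ⟨le_refl 0, zero_le_one⟩⟩ = 0}

/-- The projection `π_n : C → ℝ^n`, `x ↦ (x(t_1), …, x(t_n))`. -/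
def proj (t : ℕ → ℝ) (ht : ∀ k, t k ∈ Set.Ioc (0:ℝ) 1) (n : ℕ) (x : Cz) : Fin n → ℝ :=
  fun i => (x : C(Set.Icc (0:ℝ) 1, ℝ)) ⟨t i, Set.Ioc_subset_Icc_self (ht i)⟩

/-- The covariance matrix `M_n` with entries `min (t j) (t r)`. -/
def covM (t : ℕ → ℝ) (n : ℕ) : Matrix (Fin n) (Fin n) ℝ :=
  Matrix.of fun j r => min (t (j : ℕ)) (t (r : ℕ))

/-- The centered Gaussian measure on `ℝ^n` with (positive definite) covariance matrix `M`:
the measure with density `u ↦ ((2π)^n det M)^{-1/2} exp (-⟨u, M⁻¹ u⟩ / 2)` w.r.t. Lebesgue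
measure. -/
def gauss (n : ℕ) (M : Matrix (Fin n) (Fin n) ℝ) : Measure (Fin n → ℝ) :=
  volume.withDensity fun u =>
    ENNReal.ofReal ((((2 * Real.pi) ^ n * M.det) ^ (-(1:ℝ)/2 : ℝ)) *
      Real.exp (-(u ⬝ᵥ M⁻¹.mulVec u) / 2))

/-- `φ(K) = inf_{n ≥ 1} ν_n (π_n(K))`. -/
def phi (t : ℕ → ℝ) (ht : ∀ k, t k ∈ Set.Ioc (0:ℝ) 1) (K : Set Cz) : ℝ≥0∞ :=
  ⨅ n : ℕ, gauss (n+1) (covM t (n+1)) (proj t ht (n+1) '' K)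

/-- `μ(A) = sup {φ(K) : K ⊆ A, K compact}`. -/
def mu (t : ℕ → ℝ) (ht : ∀ k, t k ∈ Set.Ioc (0:ℝ) 1) (A : Set Cz) : ℝ≥0∞ :=
  ⨆ (K : Set Cz) (_ : K ⊆ A) (_ : IsCompact K), phi t ht K


/-- Continuity of the projection. -/
lemma proj_continuous (t : ℕ → ℝ) (ht : ∀ k, t k ∈ Set.Ioc (0:ℝ) 1) (n : ℕ) :
    Continuous (proj t ht n) :=
  continuous_pi fun _ => (continuous_eval_const _).comp continuous_subtype_val

/-- Continuity of the Gaussian density. -/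
lemma gauss_density_continuous (n : ℕ) (M : Matrix (Fin n) (Fin n) ℝ) :
    Continuous (fun u : Fin n → ℝ =>
      ((((2 * Real.pi) ^ n * M.det) ^ (-(1:ℝ)/2 : ℝ)) *
      Real.exp (-(u ⬝ᵥ M⁻¹.mulVec u) / 2))) := by
  apply Continuous.mul continuous_const
  apply Real.continuous_exp.comp
  apply Continuous.div_const
  apply Continuous.neg
  simp only [dotProduct, Matrix.mulVec]
  fun_prop

/-- The Gaussian measure is finite on compact sets. -/
lemma gauss_lt_top_of_isCompact (n : ℕ) (M : Matrix (Fin n) (Fin n) ℝ)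
    {S : Set (Fin n → ℝ)} (hS : IsCompact S) : gauss n M S < ∞ := by
  rw [gauss, withDensity_apply _ hS.isClosed.measurableSet]
  have : ∀ u : Fin n → ℝ, ENNReal.ofReal ((((2 * Real.pi) ^ n * M.det) ^ (-(1:ℝ)/2 : ℝ)) *
      Real.exp (-(u ⬝ᵥ M⁻¹.mulVec u) / 2)) =
      ((fun u => Real.toNNReal ((((2 * Real.pi) ^ n * M.det) ^ (-(1:ℝ)/2 : ℝ)) *
      Real.exp (-(u ⬝ᵥ M⁻¹.mulVec u) / 2))) u : ℝ≥0∞) := fun u => rfl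
  simp only [this]
  exact setLIntegral_lt_top_of_isCompact hS.measure_lt_top.ne hS
    (continuous_real_toNNReal.comp (gauss_density_continuous n M))

/-- Image of a decreasing intersection of compacts under a continuous map. -/
lemma image_iInter_of_antitone_compact {X Y : Type*} [TopologicalSpace X] [TopologicalSpace Y]
    [T2Space X] [T1Space Y] {f : X → Y} (hf : Continuous f) {K : ℕ → Set X}
    (hK : ∀ m, IsCompact (K m)) (hmono : Antitone K) :
    f '' (⋂ m, K m) = ⋂ m, f '' K m := by
  refine subset_antisymm (Set.image_iInter_subset _ _) (fun y hy => ?_)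
  have h1 : ∀ m, (K m ∩ f ⁻¹' {y}).Nonempty := by
    intro m
    obtain ⟨x, hx, hxy⟩ := Set.mem_iInter.1 hy m
    exact ⟨x, hx, hxy⟩
  obtain ⟨x, hx⟩ := IsCompact.nonempty_iInter_of_sequence_nonempty_isCompact_isClosed
    (fun m => K m ∩ f ⁻¹' {y})
    (fun m => Set.inter_subset_inter_left _ (hmono (Nat.le_succ m))) h1
    ((hK 0).inter_right (isClosed_singleton.preimage hf))
    (fun m => ((hK m).isClosed).inter (isClosed_singleton.preimage hf))
  rw [Set.mem_iInter] at hx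
  exact ⟨x, Set.mem_iInter.2 fun m => (hx m).1, (hx 0).2⟩

/-- `phi` of a decreasing intersection of compacts. -/
lemma phi_iInter (t : ℕ → ℝ) (ht : ∀ k, t k ∈ Set.Ioc (0:ℝ) 1)
    (K : ℕ → Set Cz) (hK : ∀ m, IsCompact (K m)) (hmono : Antitone K) :
    phi t ht (⋂ m, K m) = ⨅ m, phi t ht (K m) := by
  unfold phi
  rw [iInf_comm]
  refine iInf_congr fun n => ?_
  rw [image_iInter_of_antitone_compact (proj_continuous t ht (n+1)) hK hmono]
  have himg : ∀ m, IsCompact (proj t ht (n+1) '' K m) :=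
    fun m => (hK m).image (proj_continuous t ht (n+1))
  refine (Directed.measure_iInter
    (fun m => ((himg m).isClosed.measurableSet).nullMeasurableSet)
    ?_ ⟨0, (gauss_lt_top_of_isCompact _ _ (himg 0)).ne⟩)
  intro a b
  refine ⟨max a b, ?_, ?_⟩
  · exact Set.image_mono (hmono (le_max_left a b))
  · exact Set.image_mono (hmono (le_max_right a b))

/-- if `K_m` are compact and decrease to `K = ⋂_m K_m`, then
`φ(K_m) → φ(K)`. -/
theorem stmt6 (t : ℕ → ℝ) (ht : ∀ k, t k ∈ Set.Ioc (0:ℝ) 1)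
    (htinj : Function.Injective t)
    (htdense : Set.Icc (0:ℝ) 1 ⊆ closure (Set.range t))
    (K : ℕ → Set Cz) (hK : ∀ m, IsCompact (K m)) (hmono : Antitone K) :
    Tendsto (fun m => phi t ht (K m)) atTop (𝓝 (phi t ht (⋂ m, K m))) := by
  rw [phi_iInter t ht K hK hmono]
  apply tendsto_atTop_iInf
  intro a b hab
  exact iInf_mono fun n => measure_mono (Set.image_mono (hmono hab))

end
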